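/- Let θ be a tree on ℕ with the parameterized Tsirelson norm ‖·‖_θ, and let (yₙ) be a normalized block sequence yₙ = Σ_{i=pₙ+1}^{p_{n+1}} bᵢ e_{sᵢ} of the standard basis (e_{sₙ}) of the completion of (c₀₀(θ), ‖·‖_θ), whose supports are pairwise completely incomparable. Then for every sequence of scalars (aₙ), ‖Σₙ aₙ e_{s_{pₙ+1}}‖_θ ≤ ‖Σₙ aₙ yₙ‖_θ. -/

import Mathlib

def TreeComparable (s t : List ℕ) : Prop := s <+: t ∨ t <+: s

def IsTree (θ : Set (List ℕ)) : Prop := ∀ s ∈ θ, ∀ t : List ℕ, t <+: s → t ∈ θ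

def CompIncomp (A B : Set (List ℕ)) : Prop := ∀ s ∈ A, ∀ t ∈ B, ¬ TreeComparable s t

def CompatibleEnum (σ : ℕ ≃ List ℕ) : Prop := ∀ s t : List ℕ, s <+: t → σ.symm s ≤ σ.symm t

/-- Sup norm of a finitely supported vector. -/
noncomputable def supVal (x : List ℕ →₀ ℝ) : ℝ := ⨆ s : List ℕ, |x s|

/-- Admissible families for the parameterized Tsirelson norm: `k` pairwise completely
incomparable nonempty finite subsets of `θ`, successive for the enumeration `σ`, with
`k ≤ E₁`. -/
def TsAdmissible (θ : Set (List ℕ)) (σ : ℕ ≃ List ℕ) (k : ℕ)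
    (E : Fin k → Finset (List ℕ)) : Prop :=
  (∀ i, (E i).Nonempty ∧ ↑(E i) ⊆ θ) ∧
  (∀ i j : Fin k, i < j → ∀ s ∈ E i, ∀ t ∈ E j, σ.symm s < σ.symm t) ∧
  (∀ i, ∀ s ∈ E i, k ≤ σ.symm s) ∧
  (∀ i j : Fin k, i ≠ j → CompIncomp ↑(E i) ↑(E j))

/-- Admissible families for the unrestricted Tsirelson norm (no complete-incomparability
requirement). -/
def TAdmissible (θ : Set (List ℕ)) (σ : ℕ ≃ List ℕ) (k : ℕ)
    (E : Fin k → Finset (List ℕ)) : Prop :=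
  (∀ i, (E i).Nonempty ∧ ↑(E i) ⊆ θ) ∧
  (∀ i j : Fin k, i < j → ∀ s ∈ E i, ∀ t ∈ E j, σ.symm s < σ.symm t) ∧
  (∀ i, ∀ s ∈ E i, k ≤ σ.symm s)

/-- The inductively defined parameterized Tsirelson norms `‖·‖_{θ,m}`. -/
noncomputable def tsNorm (θ : Set (List ℕ)) (σ : ℕ ≃ List ℕ) : ℕ → (List ℕ →₀ ℝ) → ℝ
  | 0, x => supVal x
  | m + 1, x => max (supVal x)
      (2⁻¹ * sSup { r : ℝ | ∃ (k : ℕ) (E : Fin k → Finset (List ℕ)),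
        TsAdmissible θ σ k E ∧ r = ∑ i, tsNorm θ σ m (x.filter (· ∈ E i)) })

/-- The parameterized Tsirelson norm `‖x‖_θ = limₘ ‖x‖_{θ,m}`. -/
noncomputable def tsNormLim (θ : Set (List ℕ)) (σ : ℕ ≃ List ℕ) (x : List ℕ →₀ ℝ) : ℝ :=
  ⨆ m : ℕ, tsNorm θ σ m x

/-- The inductively defined unrestricted Tsirelson norms. -/
noncomputable def tNorm (θ : Set (List ℕ)) (σ : ℕ ≃ List ℕ) : ℕ → (List ℕ →₀ ℝ) → ℝ
  | 0, x => supVal x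
  | m + 1, x => max (supVal x)
      (2⁻¹ * sSup { r : ℝ | ∃ (k : ℕ) (E : Fin k → Finset (List ℕ)),
        TAdmissible θ σ k E ∧ r = ∑ i, tNorm θ σ m (x.filter (· ∈ E i)) })

noncomputable def tNormLim (θ : Set (List ℕ)) (σ : ℕ ≃ List ℕ) (x : List ℕ →₀ ℝ) : ℝ :=
  ⨆ m : ℕ, tNorm θ σ m x


noncomputable def L1 (x : List ℕ →₀ ℝ) : ℝ := ∑ s ∈ x.support, |x s|

lemma abs_apply_le_L1 (x : List ℕ →₀ ℝ) (s : List ℕ) : |x s| ≤ L1 x := by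
  by_cases h : s ∈ x.support
  · exact Finset.single_le_sum (f := fun t => |x t|) (fun t _ => abs_nonneg _) h
  · rw [Finsupp.notMem_support_iff.mp h]
    simp only [abs_zero]
    exact Finset.sum_nonneg fun t _ => abs_nonneg _

lemma L1_nonneg (x : List ℕ →₀ ℝ) : 0 ≤ L1 x :=
  Finset.sum_nonneg fun t _ => abs_nonneg _

lemma bddAbove_abs (x : List ℕ →₀ ℝ) : BddAbove (Set.range fun s => |x s|) :=
  ⟨L1 x, by rintro r ⟨s, rfl⟩; exact abs_apply_le_L1 x s⟩

lemma supVal_le_L1 (x : List ℕ →₀ ℝ) : supVal x ≤ L1 x := ciSup_le (abs_apply_le_L1 x)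

lemma abs_le_supVal (x : List ℕ →₀ ℝ) (s : List ℕ) : |x s| ≤ supVal x :=
  le_ciSup (bddAbove_abs x) s

lemma supVal_nonneg (x : List ℕ →₀ ℝ) : 0 ≤ supVal x :=
  le_trans (abs_nonneg _) (abs_le_supVal x [])

lemma L1_filter (x : List ℕ →₀ ℝ) (P : List ℕ → Prop) [DecidablePred P] :
    L1 (x.filter P) = ∑ s ∈ x.support.filter P, |x s| := by
  unfold L1
  rw [Finsupp.support_filter]
  exact Finset.sum_congr rfl fun s hs => by
    rw [Finsupp.filter_apply_pos _ _ (Finset.mem_filter.mp hs).2]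

def TsSet (θ : Set (List ℕ)) (σ : ℕ ≃ List ℕ) (m : ℕ) (x : List ℕ →₀ ℝ) : Set ℝ :=
  { r | ∃ (k : ℕ) (E : Fin k → Finset (List ℕ)),
        TsAdmissible θ σ k E ∧ r = ∑ i, tsNorm θ σ m (x.filter (· ∈ E i)) }

lemma tsNorm_succ (θ : Set (List ℕ)) (σ : ℕ ≃ List ℕ) (m : ℕ) (x : List ℕ →₀ ℝ) :
    tsNorm θ σ (m+1) x = max (supVal x) (2⁻¹ * sSup (TsSet θ σ m x)) := rfl

lemma zero_mem_TsSet (θ : Set (List ℕ)) (σ : ℕ ≃ List ℕ) (m : ℕ) (x : List ℕ →₀ ℝ) :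
    (0:ℝ) ∈ TsSet θ σ m x :=
  ⟨0, fun i => i.elim0, ⟨fun i => i.elim0, fun i => i.elim0, fun i => i.elim0,
    fun i => i.elim0⟩, by simp⟩

lemma TsAdmissible.pairwise_notmem {θ : Set (List ℕ)} {σ : ℕ ≃ List ℕ} {k : ℕ}
    {E : Fin k → Finset (List ℕ)} (adm : TsAdmissible θ σ k E) :
    ∀ i j : Fin k, i ≠ j → ∀ s ∈ E i, s ∉ E j := by
  intro i j hij s hsi hsj
  rcases hij.lt_or_gt with h | h
  · exact lt_irrefl _ (adm.2.1 i j h s hsi s hsj)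
  · exact lt_irrefl _ (adm.2.1 j i h s hsj s hsi)

lemma sum_L1_filter_le (x : List ℕ →₀ ℝ) {k : ℕ} {E : Fin k → Finset (List ℕ)}
    (hdis : ∀ i j : Fin k, i ≠ j → ∀ s ∈ E i, s ∉ E j) :
    ∑ i, L1 (x.filter (· ∈ E i)) ≤ L1 x := by
  have h1 : ∀ i : Fin k, L1 (x.filter (· ∈ E i)) = ∑ s ∈ x.support.filter (· ∈ E i), |x s| :=
    fun i => L1_filter x _
  simp only [h1]
  rw [← Finset.sum_biUnion]
  · exact Finset.sum_le_sum_of_subset_of_nonneg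
      (fun s hs => (Finset.mem_filter.mp (Finset.mem_biUnion.mp hs).choose_spec.2).1)
      (fun s _ _ => abs_nonneg _)
  · intro i _ j _ hij
    simp only [Finset.disjoint_left, Finset.mem_filter]
    rintro s ⟨_, hsi⟩ ⟨_, hsj⟩
    exact hdis i j hij s hsi hsj

variable (θ : Set (List ℕ)) (σ : ℕ ≃ List ℕ)

lemma supVal_le_tsNorm (m : ℕ) (x : List ℕ →₀ ℝ) : supVal x ≤ tsNorm θ σ m x := by
  cases m with
  | zero => exact le_rfl
  | succ m => rw [tsNorm_succ]; exact le_max_left _ _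

lemma tsNorm_le_L1 : ∀ (m : ℕ) (x : List ℕ →₀ ℝ), tsNorm θ σ m x ≤ L1 x := by
  intro m
  induction m with
  | zero => exact fun x => supVal_le_L1 x
  | succ m ih =>
    intro x
    rw [tsNorm_succ]
    refine max_le (supVal_le_L1 x) ?_
    have hbdd : ∀ r ∈ TsSet θ σ m x, r ≤ L1 x := by
      rintro r ⟨k, E, adm, rfl⟩
      calc ∑ i, tsNorm θ σ m (x.filter (· ∈ E i)) ≤ ∑ i, L1 (x.filter (· ∈ E i)) :=
            Finset.sum_le_sum fun i _ => ih _
        _ ≤ L1 x := sum_L1_filter_le x adm.pairwise_notmem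
    have hsup : sSup (TsSet θ σ m x) ≤ L1 x := Real.sSup_le hbdd (L1_nonneg x)
    have h0 : 0 ≤ sSup (TsSet θ σ m x) :=
      le_csSup ⟨L1 x, hbdd⟩ (zero_mem_TsSet θ σ m x)
    linarith

lemma tsNorm_nonneg (m : ℕ) (x : List ℕ →₀ ℝ) : 0 ≤ tsNorm θ σ m x :=
  (supVal_nonneg x).trans (supVal_le_tsNorm θ σ m x)

lemma TsSet_bddAbove (m : ℕ) (x : List ℕ →₀ ℝ) : BddAbove (TsSet θ σ m x) := by
  refine ⟨L1 x, ?_⟩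
  rintro r ⟨k, E, adm, rfl⟩
  calc ∑ i, tsNorm θ σ m (x.filter (· ∈ E i)) ≤ ∑ i, L1 (x.filter (· ∈ E i)) :=
        Finset.sum_le_sum fun i _ => tsNorm_le_L1 θ σ m _
    _ ≤ L1 x := sum_L1_filter_le x adm.pairwise_notmem

lemma sSup_TsSet_nonneg (m : ℕ) (x : List ℕ →₀ ℝ) : 0 ≤ sSup (TsSet θ σ m x) :=
  le_csSup (TsSet_bddAbove θ σ m x) (zero_mem_TsSet θ σ m x)

lemma mem_TsSet_le {m : ℕ} {x : List ℕ →₀ ℝ} {r : ℝ} (hr : r ∈ TsSet θ σ m x) :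
    r ≤ 2 * tsNorm θ σ (m+1) x := by
  have h1 : r ≤ sSup (TsSet θ σ m x) := le_csSup (TsSet_bddAbove θ σ m x) hr
  have h2 : 2⁻¹ * sSup (TsSet θ σ m x) ≤ tsNorm θ σ (m+1) x := by
    rw [tsNorm_succ]; exact le_max_right _ _
  linarith

lemma tsNorm_mono_succ (m : ℕ) (x : List ℕ →₀ ℝ) :
    tsNorm θ σ m x ≤ tsNorm θ σ (m+1) x := by
  induction m generalizing x with
  | zero => rw [tsNorm_succ]; exact le_max_left _ _
  | succ m ih =>
    rw [tsNorm_succ, tsNorm_succ]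
    refine max_le_max le_rfl (mul_le_mul_of_nonneg_left ?_ (by norm_num))
    refine Real.sSup_le ?_ (sSup_TsSet_nonneg θ σ (m+1) x)
    rintro r ⟨k, E, adm, rfl⟩
    calc ∑ i, tsNorm θ σ m (x.filter (· ∈ E i))
        ≤ ∑ i, tsNorm θ σ (m+1) (x.filter (· ∈ E i)) := Finset.sum_le_sum fun i _ => ih _
      _ ≤ sSup (TsSet θ σ (m+1) x) :=
          le_csSup (TsSet_bddAbove θ σ (m+1) x) ⟨k, E, adm, rfl⟩

lemma tsNorm_mono (x : List ℕ →₀ ℝ) : Monotone (fun m => tsNorm θ σ m x) :=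
  monotone_nat_of_le_succ fun m => tsNorm_mono_succ θ σ m x

lemma bddAbove_tsNorm (x : List ℕ →₀ ℝ) : BddAbove (Set.range fun m => tsNorm θ σ m x) :=
  ⟨L1 x, by rintro r ⟨m, rfl⟩; exact tsNorm_le_L1 θ σ m x⟩

lemma tsNorm_le_tsNormLim (m : ℕ) (x : List ℕ →₀ ℝ) : tsNorm θ σ m x ≤ tsNormLim θ σ x :=
  le_ciSup (bddAbove_tsNorm θ σ x) m

lemma tsNormLim_nonneg (x : List ℕ →₀ ℝ) : 0 ≤ tsNormLim θ σ x :=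
  (tsNorm_nonneg θ σ 0 x).trans (tsNorm_le_tsNormLim θ σ 0 x)

lemma tsNorm_zero (m : ℕ) : tsNorm θ σ m 0 = 0 :=
  le_antisymm (by simpa [L1] using tsNorm_le_L1 θ σ m 0) (tsNorm_nonneg θ σ m 0)

lemma tsNormLim_zero : tsNormLim θ σ 0 = 0 := by
  simp [tsNormLim, tsNorm_zero, ciSup_const]

lemma filter_filter_comm (x : List ℕ →₀ ℝ) (P Q : List ℕ → Prop)
    [DecidablePred P] [DecidablePred Q] :
    (x.filter P).filter Q = (x.filter Q).filter P := by
  ext s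
  simp only [Finsupp.filter_apply]
  split_ifs <;> rfl

lemma tsNorm_filter_le (P : List ℕ → Prop) [DecidablePred P] :
    ∀ (m : ℕ) (x : List ℕ →₀ ℝ), tsNorm θ σ m (x.filter P) ≤ tsNorm θ σ m x := by
  have habs : ∀ (x : List ℕ →₀ ℝ) (s : List ℕ), |(x.filter P) s| ≤ |x s| := by
    intro x s
    rw [Finsupp.filter_apply]
    split_ifs
    · exact le_rfl
    · simp [abs_nonneg]
  have hsup : ∀ x : List ℕ →₀ ℝ, supVal (x.filter P) ≤ supVal x :=
    fun x => ciSup_le fun s => (habs x s).trans (abs_le_supVal x s)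
  intro m
  induction m with
  | zero => exact hsup
  | succ m ih =>
    intro x
    rw [tsNorm_succ, tsNorm_succ]
    refine max_le_max (hsup x) (mul_le_mul_of_nonneg_left ?_ (by norm_num))
    refine Real.sSup_le ?_ (sSup_TsSet_nonneg θ σ m x)
    rintro r ⟨k, E, adm, rfl⟩
    calc ∑ i, tsNorm θ σ m ((x.filter P).filter (· ∈ E i))
        ≤ ∑ i, tsNorm θ σ m (x.filter (· ∈ E i)) := by
          refine Finset.sum_le_sum fun i _ => ?_
          rw [filter_filter_comm]
          exact ih _
      _ ≤ sSup (TsSet θ σ m x) :=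
          le_csSup (TsSet_bddAbove θ σ m x) ⟨k, E, adm, rfl⟩

lemma tsNormLim_filter_le (P : List ℕ → Prop) [DecidablePred P] (x : List ℕ →₀ ℝ) :
    tsNormLim θ σ (x.filter P) ≤ tsNormLim θ σ x :=
  ciSup_le fun m => (tsNorm_filter_le θ σ P m x).trans (tsNorm_le_tsNormLim θ σ m x)

lemma tsNorm_smul_le (c : ℝ) : ∀ (m : ℕ) (x : List ℕ →₀ ℝ),
    tsNorm θ σ m (c • x) ≤ |c| * tsNorm θ σ m x := by
  have hsup : ∀ x : List ℕ →₀ ℝ, supVal (c • x) ≤ |c| * supVal x := by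
    intro x
    refine ciSup_le fun s => ?_
    rw [Finsupp.smul_apply, smul_eq_mul, abs_mul]
    exact mul_le_mul_of_nonneg_left (abs_le_supVal x s) (abs_nonneg c)
  intro m
  induction m with
  | zero => exact hsup
  | succ m ih =>
    intro x
    rw [tsNorm_succ, tsNorm_succ, mul_max_of_nonneg _ _ (abs_nonneg c)]
    refine max_le_max (hsup x) ?_
    rw [← mul_assoc, mul_comm |c| 2⁻¹, mul_assoc]
    refine mul_le_mul_of_nonneg_left ?_ (by norm_num)
    refine Real.sSup_le ?_ (mul_nonneg (abs_nonneg c) (sSup_TsSet_nonneg θ σ m x))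
    rintro r ⟨k, E, adm, rfl⟩
    calc ∑ i, tsNorm θ σ m ((c • x).filter (· ∈ E i))
        = ∑ i, tsNorm θ σ m (c • (x.filter (· ∈ E i))) := by
          refine Finset.sum_congr rfl fun i _ => ?_
          rw [Finsupp.filter_smul]
      _ ≤ ∑ i, |c| * tsNorm θ σ m (x.filter (· ∈ E i)) :=
          Finset.sum_le_sum fun i _ => ih _
      _ = |c| * ∑ i, tsNorm θ σ m (x.filter (· ∈ E i)) := by rw [Finset.mul_sum]
      _ ≤ |c| * sSup (TsSet θ σ m x) :=
          mul_le_mul_of_nonneg_left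
            (le_csSup (TsSet_bddAbove θ σ m x) ⟨k, E, adm, rfl⟩) (abs_nonneg c)

lemma tsNorm_smul_ge (c : ℝ) (m : ℕ) (x : List ℕ →₀ ℝ) :
    |c| * tsNorm θ σ m x ≤ tsNorm θ σ m (c • x) := by
  by_cases hc : c = 0
  · simp [hc, tsNorm_nonneg]
  · have h := tsNorm_smul_le θ σ c⁻¹ m (c • x)
    rw [smul_smul, inv_mul_cancel₀ hc, one_smul, abs_inv] at h
    have hcpos : 0 < |c| := abs_pos.mpr hc
    calc |c| * tsNorm θ σ m x ≤ |c| * (|c|⁻¹ * tsNorm θ σ m (c • x)) :=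
          mul_le_mul_of_nonneg_left h (abs_nonneg c)
      _ = tsNorm θ σ m (c • x) := by field_simp

lemma ts_ciSup_add_le {g h : ℕ → ℝ} (hg : Monotone g) (hh : Monotone h)
    {Bg Bh : ℝ} (hBg : ∀ M, g M ≤ Bg) (hBh : ∀ M, h M ≤ Bh) :
    (⨆ M, g M) + (⨆ M, h M) ≤ ⨆ M, (g M + h M) := by
  have hbdd : BddAbove (Set.range fun M => g M + h M) :=
    ⟨Bg + Bh, by rintro r ⟨M, rfl⟩; exact add_le_add (hBg M) (hBh M)⟩
  have key : ∀ m m', g m + h m' ≤ ⨆ M, (g M + h M) := by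
    intro m m'
    calc g m + h m' ≤ g (max m m') + h (max m m') :=
          add_le_add (hg (le_max_left m m')) (hh (le_max_right m m'))
      _ ≤ _ := le_ciSup hbdd (max m m')
  have h1 : (⨆ M, g M) ≤ (⨆ M, (g M + h M)) - ⨆ M, h M := by
    refine ciSup_le fun m => ?_
    have h2 : (⨆ M, h M) ≤ (⨆ M, (g M + h M)) - g m :=
      ciSup_le fun m' => by linarith [key m m']
    linarith
  linarith

lemma sum_ciSup_le_ciSup_sum {ι : Type*} [DecidableEq ι] (T : Finset ι) (f : ι → ℕ → ℝ)
    (B : ι → ℝ) (hm : ∀ i ∈ T, Monotone (f i)) (hB : ∀ i ∈ T, ∀ M, f i M ≤ B i) :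
    ∑ i ∈ T, (⨆ M, f i M) ≤ ⨆ M, ∑ i ∈ T, f i M := by
  induction T using Finset.induction_on with
  | empty => simp
  | @insert a T ha ih =>
    rw [Finset.sum_insert ha]
    have hrw : ∀ M, ∑ i ∈ insert a T, f i M = f a M + ∑ i ∈ T, f i M :=
      fun M => Finset.sum_insert ha
    simp only [hrw]
    have ih' := ih (fun i hi => hm i (Finset.mem_insert_of_mem hi))
      (fun i hi => hB i (Finset.mem_insert_of_mem hi))
    have hma : Monotone (f a) := hm a (Finset.mem_insert_self a T)
    have hsummono : Monotone (fun M => ∑ i ∈ T, f i M) := by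
      intro M M' hMM'
      exact Finset.sum_le_sum fun i hi => hm i (Finset.mem_insert_of_mem hi) hMM'
    have hstep := ts_ciSup_add_le hma hsummono
      (hB a (Finset.mem_insert_self a T))
      (fun M => Finset.sum_le_sum fun i hi => hB i (Finset.mem_insert_of_mem hi) M :
        ∀ M, (fun M => ∑ i ∈ T, f i M) M ≤ ∑ i ∈ T, B i)
    calc (⨆ M, f a M) + ∑ i ∈ T, ⨆ M, f i M
        ≤ (⨆ M, f a M) + ⨆ M, ∑ i ∈ T, f i M := add_le_add le_rfl ih'
      _ ≤ ⨆ M, (f a M + ∑ i ∈ T, f i M) := hstep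

noncomputable def Xv (σ : ℕ ≃ List ℕ) (p : ℕ → ℕ) (a : ℕ → ℝ) (S : Finset ℕ) :
    List ℕ →₀ ℝ := ∑ k ∈ S, a k • Finsupp.single (σ (p k + 1)) (1 : ℝ)

noncomputable def Zv (y : ℕ → List ℕ →₀ ℝ) (a : ℕ → ℝ) (S : Finset ℕ) :
    List ℕ →₀ ℝ := ∑ k ∈ S, a k • y k

def Sel (σ : ℕ ≃ List ℕ) (p : ℕ → ℕ) (S : Finset ℕ) (E : Finset (List ℕ)) : Finset ℕ :=
  S.filter (fun k => σ (p k + 1) ∈ E)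

def Fam (σ : ℕ ≃ List ℕ) (p : ℕ → ℕ) (y : ℕ → List ℕ →₀ ℝ) (S : Finset ℕ)
    (E : Finset (List ℕ)) : Finset (List ℕ) :=
  (Sel σ p S E).biUnion (fun k' => (y k').support)


/-- for a normalized block sequence `yₙ = Σ_{i=pₙ+1}^{p_{n+1}} bᵢ e_{σ(i)}` in
the parameterized Tsirelson space over `θ` with pairwise completely incomparable supports,
`‖Σ aₙ e_{σ(pₙ+1)}‖_θ ≤ ‖Σ aₙ yₙ‖_θ` for all scalars. -/
theorem tsirelson_block_lower_estimate
    (θ : Set (List ℕ)) (hθ : IsTree θ)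
    (σ : ℕ ≃ List ℕ) (hσ : CompatibleEnum σ)
    (p : ℕ → ℕ) (hp : StrictMono p) (b : ℕ → ℝ)
    (y : ℕ → (List ℕ →₀ ℝ))
    (hy : ∀ n, y n = ∑ i ∈ Finset.Ioc (p n) (p (n + 1)), b i • Finsupp.single (σ i) (1 : ℝ))
    (hθsupp : ∀ n, ↑(y n).support ⊆ θ)
    (hstart : ∀ n, σ (p n + 1) ∈ θ)
    (hnormal : ∀ n, tsNormLim θ σ (y n) = 1)
    (hincomp : ∀ n m, n ≠ m → CompIncomp ↑(y n).support ↑(y m).support) :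
    ∀ (a : ℕ → ℝ) (n : ℕ),
      tsNormLim θ σ (∑ k ∈ Finset.range n, a k • Finsupp.single (σ (p k + 1)) (1 : ℝ)) ≤
        tsNormLim θ σ (∑ k ∈ Finset.range n, a k • y k) := by
  intro a n
  classical
  -- support location of y k
  have hsuppY : ∀ k s, y k s ≠ 0 → p k < σ.symm s ∧ σ.symm s ≤ p (k + 1) := by
    intro k s hs
    rw [hy k, Finsupp.finset_sum_apply] at hs
    obtain ⟨i, hi, hne⟩ := Finset.exists_ne_zero_of_sum_ne_zero hs
    have hsi : s = σ i := by
      by_contra h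
      exact hne (by rw [Finsupp.smul_apply, Finsupp.single_apply,
        if_neg (fun hh => h hh.symm), smul_zero])
    rw [hsi, Equiv.symm_apply_apply]
    exact Finset.mem_Ioc.mp hi
  -- disjointness of supports
  have hdisj : ∀ k l, k ≠ l → ∀ s, y k s ≠ 0 → y l s = 0 := by
    intro k l hkl s hk
    by_contra hl
    exact hincomp k l hkl s (Finset.mem_coe.mpr (Finsupp.mem_support_iff.mpr hk))
      s (Finset.mem_coe.mpr (Finsupp.mem_support_iff.mpr hl)) (Or.inl (List.prefix_refl s))
  have hyne : ∀ k, y k ≠ 0 := by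
    intro k h
    have h1 := hnormal k
    rw [h, tsNormLim_zero] at h1
    norm_num at h1
  -- value of Xv at a nonzero coordinate
  have hXval : ∀ (S : Finset ℕ) (s : List ℕ), Xv σ p a S s ≠ 0 →
      ∃ k ∈ S, Xv σ p a S s = a k := by
    intro S s hx
    rw [Xv, Finsupp.finset_sum_apply] at hx
    obtain ⟨k, hk, hne⟩ := Finset.exists_ne_zero_of_sum_ne_zero hx
    have hs : s = σ (p k + 1) := by
      by_contra h
      exact hne (by rw [Finsupp.smul_apply, Finsupp.single_apply,
        if_neg (fun hh => h hh.symm), smul_zero])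
    refine ⟨k, hk, ?_⟩
    rw [Xv, Finsupp.finset_sum_apply, Finset.sum_eq_single k]
    · rw [hs, Finsupp.smul_apply, Finsupp.single_apply, if_pos rfl, smul_eq_mul, mul_one]
    · intro l hl hlk
      have hne2 : σ (p l + 1) ≠ s := by
        rw [hs]
        intro hc
        have := σ.injective hc
        exact hlk (hp.injective (by omega))
      rw [Finsupp.smul_apply, Finsupp.single_apply, if_neg hne2, smul_zero]
    · intro h; exact absurd hk h
  -- restriction of Zv to the support of y k
  have hZsupp : ∀ (S : Finset ℕ), ∀ k ∈ S,
      (Zv y a S).filter (· ∈ (y k).support) = a k • y k := by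
    intro S k hk
    ext s
    rw [Finsupp.filter_apply]
    by_cases hs : s ∈ (y k).support
    · rw [if_pos hs, Zv, Finsupp.finset_sum_apply]
      exact Finset.sum_eq_single k
        (fun l _ hlk => by
          rw [Finsupp.smul_apply,
            hdisj k l (Ne.symm hlk) s (Finsupp.mem_support_iff.mp hs), smul_zero])
        (fun h => absurd hk h)
    · rw [if_neg hs, Finsupp.smul_apply, Finsupp.notMem_support_iff.mp hs, smul_zero]
  -- restriction of Xv to a set of coordinates
  have hXfil : ∀ (S : Finset ℕ) (E : Finset (List ℕ)),
      (Xv σ p a S).filter (· ∈ E) = Xv σ p a (Sel σ p S E) := by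
    intro S E
    ext s
    rw [Finsupp.filter_apply, Xv, Xv, Sel, Finsupp.finset_sum_apply, Finsupp.finset_sum_apply]
    by_cases hs : s ∈ E
    · rw [if_pos hs]
      refine (Finset.sum_subset (Finset.filter_subset _ _) ?_).symm
      intro k hk hkn
      have hkE : σ (p k + 1) ∉ E := fun h => hkn (Finset.mem_filter.mpr ⟨hk, h⟩)
      rw [Finsupp.smul_apply, Finsupp.single_apply,
        if_neg (fun h => hkE (by rw [h]; exact hs)), smul_zero]
    · rw [if_neg hs]
      refine (Finset.sum_eq_zero ?_).symm
      intro k hk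
      have hkE : σ (p k + 1) ∈ E := (Finset.mem_filter.mp hk).2
      rw [Finsupp.smul_apply, Finsupp.single_apply,
        if_neg (fun h => hs (by rw [← h]; exact hkE)), smul_zero]
  -- restriction of Zv to a union of supports
  have hZfil : ∀ (S Sd : Finset ℕ), Sd ⊆ S →
      (Zv y a S).filter (· ∈ Sd.biUnion (fun k => (y k).support)) = Zv y a Sd := by
    intro S Sd hSd
    ext s
    rw [Finsupp.filter_apply, Zv, Zv, Finsupp.finset_sum_apply, Finsupp.finset_sum_apply]
    by_cases hs : s ∈ Sd.biUnion (fun k => (y k).support)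
    · rw [if_pos hs]
      obtain ⟨k0, hk0, hsk0⟩ := Finset.mem_biUnion.mp hs
      have hy0 : y k0 s ≠ 0 := Finsupp.mem_support_iff.mp hsk0
      rw [Finset.sum_eq_single k0
          (fun l _ hlk => by
            rw [Finsupp.smul_apply, hdisj k0 l (Ne.symm hlk) s hy0, smul_zero])
          (fun h => absurd (hSd hk0) h),
        Finset.sum_eq_single k0
          (fun l _ hlk => by
            rw [Finsupp.smul_apply, hdisj k0 l (Ne.symm hlk) s hy0, smul_zero])
          (fun h => absurd hk0 h)]
    · rw [if_neg hs]
      refine (Finset.sum_eq_zero ?_).symm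
      intro k hk
      have hyk : y k s = 0 := by
        by_contra h
        exact hs (Finset.mem_biUnion.mpr ⟨k, hk, Finsupp.mem_support_iff.mpr h⟩)
      rw [Finsupp.smul_apply, hyk, smul_zero]
  -- coefficient bound
  have hcoef : ∀ (S : Finset ℕ), ∀ k ∈ S, |a k| ≤ tsNormLim θ σ (Zv y a S) := by
    intro S k hk
    have h1 : ∀ m, |a k| * tsNorm θ σ m (y k) ≤ tsNormLim θ σ (a k • y k) :=
      fun m => (tsNorm_smul_ge θ σ (a k) m (y k)).trans (tsNorm_le_tsNormLim θ σ m _)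
    have h2 : |a k| ≤ tsNormLim θ σ (a k • y k) := by
      by_cases ha : a k = 0
      · rw [ha, abs_zero]; exact tsNormLim_nonneg θ σ _
      · have hpos : 0 < |a k| := abs_pos.mpr ha
        have h3 : (⨆ m, tsNorm θ σ m (y k)) ≤ tsNormLim θ σ (a k • y k) / |a k| := by
          refine ciSup_le fun m => ?_
          rw [le_div_iff₀ hpos, mul_comm]
          exact h1 m
        have h3' : tsNormLim θ σ (y k) ≤ tsNormLim θ σ (a k • y k) / |a k| := h3
        rw [hnormal k, le_div_iff₀ hpos, one_mul] at h3'
        exact h3'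
    calc |a k| ≤ tsNormLim θ σ (a k • y k) := h2
      _ = tsNormLim θ σ ((Zv y a S).filter (· ∈ (y k).support)) := by rw [hZsupp S k hk]
      _ ≤ tsNormLim θ σ (Zv y a S) := tsNormLim_filter_le θ σ _ _
  -- sup-norm bound
  have hsupX : ∀ S : Finset ℕ, supVal (Xv σ p a S) ≤ tsNormLim θ σ (Zv y a S) := by
    intro S
    refine ciSup_le fun s => ?_
    by_cases hx : Xv σ p a S s = 0
    · rw [hx, abs_zero]; exact tsNormLim_nonneg θ σ _
    · obtain ⟨k, hk, hval⟩ := hXval S s hx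
      rw [hval]
      exact hcoef S k hk
  -- main induction
  have main : ∀ (m : ℕ) (S : Finset ℕ),
      tsNorm θ σ m (Xv σ p a S) ≤ tsNormLim θ σ (Zv y a S) := by
    intro m
    induction m with
    | zero => exact fun S => hsupX S
    | succ m ih =>
      intro S
      rw [tsNorm_succ]
      have hC : 0 ≤ tsNormLim θ σ (Zv y a S) := tsNormLim_nonneg θ σ _
      refine max_le (hsupX S) ?_
      have hkey : sSup (TsSet θ σ m (Xv σ p a S)) ≤ 2 * tsNormLim θ σ (Zv y a S) := by
        refine Real.sSup_le ?_ (by linarith)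
        rintro r ⟨k, E, adm, rfl⟩
        set T : Finset (Fin k) :=
          Finset.univ.filter (fun i => (Sel σ p S (E i)).Nonempty) with hTdef
        have hvanish : ∀ i ∈ Finset.univ, i ∉ T →
            tsNorm θ σ m (Xv σ p a (Sel σ p S (E i))) = 0 := by
          intro i _ hiT
          have hemp : Sel σ p S (E i) = ∅ :=
            Finset.not_nonempty_iff_eq_empty.mp
              (fun hne => hiT (by rw [hTdef]; exact
                Finset.mem_filter.mpr ⟨Finset.mem_univ i, hne⟩))
          have hX0 : Xv σ p a (∅ : Finset ℕ) = 0 := by rw [Xv, Finset.sum_empty]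
          rw [hemp, hX0, tsNorm_zero]
        have h1 : ∑ i, tsNorm θ σ m ((Xv σ p a S).filter (· ∈ E i))
            = ∑ i ∈ T, tsNorm θ σ m (Xv σ p a (Sel σ p S (E i))) := by
          simp only [hXfil S]
          exact (Finset.sum_subset (Finset.subset_univ T) hvanish).symm
        have h2 : ∑ i ∈ T, tsNorm θ σ m (Xv σ p a (Sel σ p S (E i)))
            ≤ ∑ i ∈ T, tsNormLim θ σ (Zv y a (Sel σ p S (E i))) :=
          Finset.sum_le_sum fun i _ => ih (Sel σ p S (E i))
        have h3 : ∑ i ∈ T, tsNormLim θ σ (Zv y a (Sel σ p S (E i)))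
            ≤ ⨆ M, ∑ i ∈ T, tsNorm θ σ M (Zv y a (Sel σ p S (E i))) :=
          sum_ciSup_le_ciSup_sum T (fun i M => tsNorm θ σ M (Zv y a (Sel σ p S (E i))))
            (fun i => L1 (Zv y a (Sel σ p S (E i))))
            (fun i _ => tsNorm_mono θ σ _) (fun i _ M => tsNorm_le_L1 θ σ M _)
        have h4 : ∀ M : ℕ, ∑ i ∈ T, tsNorm θ σ M (Zv y a (Sel σ p S (E i)))
            ≤ 2 * tsNormLim θ σ (Zv y a S) := by
          intro M
          set e : Fin T.card ≃o {x // x ∈ T} := T.orderIsoOfFin rfl with hedef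
          have hmemT : ∀ j : Fin T.card, (Sel σ p S (E (e j))).Nonempty := by
            intro j
            have hjT : ((e j : {x // x ∈ T}) : Fin k) ∈ T := (e j).2
            exact (Finset.mem_filter.mp hjT).2
          have hFmem : ∀ (i : Fin k) (s : List ℕ), s ∈ Fam σ p y S (E i) →
              ∃ k', k' ∈ Sel σ p S (E i) ∧ y k' s ≠ 0 := by
            intro i s hs
            simp only [Fam] at hs
            obtain ⟨k', hk', hsk'⟩ := Finset.mem_biUnion.mp hs
            exact ⟨k', hk', Finsupp.mem_support_iff.mp hsk'⟩
          have hmemE : ∀ (i : Fin k) (k' : ℕ), k' ∈ Sel σ p S (E i) →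
              σ (p k' + 1) ∈ E i := by
            intro i k' h
            simp only [Sel] at h
            exact (Finset.mem_filter.mp h).2
          have hcardq : T.card ≤ k := by simpa using Finset.card_le_univ T
          have hlt : ∀ (j j' : Fin T.card), j < j' →
              ((e j : {x // x ∈ T}) : Fin k) < ((e j' : {x // x ∈ T}) : Fin k) :=
            fun j j' h => Subtype.coe_lt_coe.mpr (e.strictMono h)
          have hnej : ∀ (j j' : Fin T.card), j ≠ j' →
              ((e j : {x // x ∈ T}) : Fin k) ≠ ((e j' : {x // x ∈ T}) : Fin k) :=
            fun j j' h hc => h (e.injective (Subtype.ext hc))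
          have adm' : TsAdmissible θ σ T.card (fun j => Fam σ p y S (E (e j))) := by
            refine ⟨?_, ?_, ?_, ?_⟩
            · intro j
              constructor
              · obtain ⟨k0, hk0⟩ := hmemT j
                obtain ⟨s0, hs0⟩ := Finsupp.support_nonempty_iff.mpr (hyne k0)
                exact ⟨s0, by simp only [Fam]; exact Finset.mem_biUnion.mpr ⟨k0, hk0, hs0⟩⟩
              · intro s hs
                obtain ⟨k', _, hy'⟩ := hFmem (e j) s (Finset.mem_coe.mp hs)
                exact hθsupp k' (Finset.mem_coe.mpr (Finsupp.mem_support_iff.mpr hy'))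
            · intro j j' hjj' s hs t ht
              obtain ⟨k', hk', hyk⟩ := hFmem (e j) s hs
              obtain ⟨l, hl, hyl⟩ := hFmem (e j') t ht
              have h5 := adm.2.1 (e j) (e j') (hlt j j' hjj')
                (σ (p k' + 1)) (hmemE (e j) k' hk') (σ (p l + 1)) (hmemE (e j') l hl)
              rw [Equiv.symm_apply_apply, Equiv.symm_apply_apply] at h5
              have hkl : k' < l := hp.lt_iff_lt.mp (by omega)
              have hs1 := hsuppY k' s hyk
              have ht1 := hsuppY l t hyl
              have hple : p (k' + 1) ≤ p l := hp.monotone (by omega)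
              omega
            · intro j s hs
              obtain ⟨k', hk', hyk⟩ := hFmem (e j) s hs
              have h5 := adm.2.2.1 (e j) (σ (p k' + 1)) (hmemE (e j) k' hk')
              rw [Equiv.symm_apply_apply] at h5
              have hs1 := hsuppY k' s hyk
              omega
            · intro j j' hjj' s hs t ht
              obtain ⟨k', hk', hyk⟩ := hFmem (e j) s (Finset.mem_coe.mp hs)
              obtain ⟨l, hl, hyl⟩ := hFmem (e j') t (Finset.mem_coe.mp ht)
              have hkl : k' ≠ l := by
                intro hcl
                subst hcl
                exact adm.pairwise_notmem (e j) (e j') (hnej j j' hjj')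
                  (σ (p k' + 1)) (hmemE (e j) k' hk') (hmemE (e j') k' hl)
              exact hincomp k' l hkl s (Finset.mem_coe.mpr (Finsupp.mem_support_iff.mpr hyk))
                t (Finset.mem_coe.mpr (Finsupp.mem_support_iff.mpr hyl))
          have hzf : ∀ j : Fin T.card,
              (Zv y a S).filter (· ∈ Fam σ p y S (E (e j))) = Zv y a (Sel σ p S (E (e j))) := by
            intro j
            simp only [Fam]
            exact hZfil S _ (by simp only [Sel]; exact Finset.filter_subset _ _)
          have hsum : ∑ i ∈ T, tsNorm θ σ M (Zv y a (Sel σ p S (E i)))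
              = ∑ j : Fin T.card,
                  tsNorm θ σ M ((Zv y a S).filter (· ∈ Fam σ p y S (E (e j)))) := by
            simp only [hzf]
            rw [← Finset.sum_attach T (fun i => tsNorm θ σ M (Zv y a (Sel σ p S (E i)))),
              ← Finset.univ_eq_attach]
            exact (Fintype.sum_equiv e.toEquiv _ _ (fun j => rfl)).symm
          have hmem : (∑ j : Fin T.card,
                tsNorm θ σ M ((Zv y a S).filter (· ∈ Fam σ p y S (E (e j)))))
              ∈ TsSet θ σ M (Zv y a S) :=
            ⟨T.card, fun j => Fam σ p y S (E (e j)), adm', rfl⟩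
          calc ∑ i ∈ T, tsNorm θ σ M (Zv y a (Sel σ p S (E i)))
              = _ := hsum
            _ ≤ 2 * tsNorm θ σ (M + 1) (Zv y a S) := mem_TsSet_le θ σ hmem
            _ ≤ 2 * tsNormLim θ σ (Zv y a S) := by
                linarith [tsNorm_le_tsNormLim θ σ (M + 1) (Zv y a S)]
        calc ∑ i, tsNorm θ σ m ((Xv σ p a S).filter (· ∈ E i))
            = ∑ i ∈ T, tsNorm θ σ m (Xv σ p a (Sel σ p S (E i))) := h1
          _ ≤ ∑ i ∈ T, tsNormLim θ σ (Zv y a (Sel σ p S (E i))) := h2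
          _ ≤ ⨆ M, ∑ i ∈ T, tsNorm θ σ M (Zv y a (Sel σ p S (E i))) := h3
          _ ≤ 2 * tsNormLim θ σ (Zv y a S) := ciSup_le h4
      linarith
  exact ciSup_le fun m => main m (Finset.range n)
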